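/- Let G = (S, M_e, M_s, ρ) be a game structure, let d ⊆ S be a set of target states, and let (base, step, conc) be a semantic acceleration lemma over S such that base ⊆ d and such that for every s ∈ conc with s ∉ d we have s ∈ Attr_Env(d ∪ {s' ∈ S | (s, s') ∈ step}). Then conc ⊆ Attr_Env(d). -/

import Mathlib

/-- A two-player game structure: states `S`, environment moves `Me`, system moves `Ms`,
and a transition relation such that every state has a successor and the two players'
moves uniquely determine the successor. -/
structure GameStructure (S : Type*) (Me : Type*) (Ms : Type*) where
  rel : S → Me → Ms → S → Prop
  exists_succ : ∀ s : S, ∃ (me : Me) (ms : Ms) (s' : S), rel s me ms s'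
  deterministic : ∀ (s : S) (me : Me) (ms : Ms) (s₁ s₂ : S),
    rel s me ms s₁ → rel s me ms s₂ → s₁ = s₂

variable {S Me Ms : Type*}

/-- The environment moves enabled in a state. -/
def enabledE (G : GameStructure S Me Ms) (s : S) : Set Me :=
  {me | ∃ (ms : Ms) (s' : S), G.rel s me ms s'}

/-- The system moves enabled in a state after a given environment move. -/
def enabledS (G : GameStructure S Me Ms) (s : S) (me : Me) : Set Ms :=
  {ms | ∃ s' : S, G.rel s me ms s'}

/-- A strategy for the system player: it maps a nonempty finite sequence of states,
given as the pair of its strict prefix `h = (s₀, …, s_{n-1})` and its last state `s = sₙ`,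
together with an environment move, to a system move; on enabled environment moves it
must choose an enabled system move. -/
structure SysStrategy (G : GameStructure S Me Ms) where
  act : List S → S → Me → Ms
  act_enabled : ∀ (h : List S) (s : S) (me : Me),
    me ∈ enabledE G s → act h s me ∈ enabledS G s me

/-- A strategy for the environment player: it maps a nonempty finite sequence of states,
given as the pair of its strict prefix `h = (s₀, …, s_{n-1})` and its last state `s = sₙ`,
to an enabled environment move. -/
structure EnvStrategy (G : GameStructure S Me Ms) where
  act : List S → S → Me
  act_enabled : ∀ (h : List S) (s : S), act h s ∈ enabledE G s

/-- `π` is a play consistent with the system strategy `σ`: at every step `n` there is an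
enabled environment move `me` such that the transition from `π n` under `me` and the
move chosen by `σ` on the history `(π 0, …, π n)` leads to `π (n+1)`. -/
def SysPlay (G : GameStructure S Me Ms) (σ : SysStrategy G) (π : ℕ → S) : Prop :=
  ∀ n : ℕ, ∃ me ∈ enabledE G (π n),
    G.rel (π n) me (σ.act ((List.range n).map π) (π n) me) (π (n + 1))

/-- `π` is a play consistent with the environment strategy `σ`: at every step `n` there
is a system move `ms` enabled after the environment move chosen by `σ` on the history
`(π 0, …, π n)` such that the corresponding transition leads to `π (n+1)`. -/
def EnvPlay (G : GameStructure S Me Ms) (σ : EnvStrategy G) (π : ℕ → S) : Prop :=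
  ∀ n : ℕ, ∃ ms ∈ enabledS G (π n) (σ.act ((List.range n).map π) (π n)),
    G.rel (π n) (σ.act ((List.range n).map π) (π n)) ms (π (n + 1))

/-- The system attractor of `T`: states from which the system has a strategy forcing
every consistent play to visit `T`. -/
def attrSys (G : GameStructure S Me Ms) (T : Set S) : Set S :=
  {s | ∃ σ : SysStrategy G, ∀ π : ℕ → S, π 0 = s → SysPlay G σ π → ∃ n : ℕ, π n ∈ T}

/-- The environment attractor of `T`: states from which the environment has a strategy
forcing every consistent play to visit `T`. -/
def attrEnv (G : GameStructure S Me Ms) (T : Set S) : Set S :=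
  {s | ∃ σ : EnvStrategy G, ∀ π : ℕ → S, π 0 = s → EnvPlay G σ π → ∃ n : ℕ, π n ∈ T}

/-- The controllable predecessor operator for the system player. -/
def cpreSys (G : GameStructure S Me Ms) (X : Set S) : Set S :=
  {s | ∀ me ∈ enabledE G s, ∃ ms ∈ enabledS G s me, ∀ s' : S, G.rel s me ms s' → s' ∈ X}

/-- The controllable predecessor operator for the environment player. -/
def cpreEnv (G : GameStructure S Me Ms) (X : Set S) : Set S :=
  {s | ∃ me ∈ enabledE G s, ∀ ms ∈ enabledS G s me, ∀ s' : S, G.rel s me ms s' → s' ∈ X}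

/-- A semantic acceleration lemma over a type `A`: a triple `(base, step, conc)` of
subsets such that (i) every infinite `step`-sequence starting in `conc` eventually
reaches `base`, and (ii) `conc \ base` is closed under `step`-successors. -/
def IsAccelLemma {A : Type*} (base : Set A) (step : Set (A × A)) (conc : Set A) : Prop :=
  (∀ α : ℕ → A, α 0 ∈ conc → (∀ i : ℕ, (α i, α (i + 1)) ∈ step) → ∃ k : ℕ, α k ∈ base) ∧
  (∀ a ∈ conc, a ∉ base → ∀ a' : A, (a, a') ∈ step → a' ∈ conc)


open scoped Classical

section AccelAux

/-- An arbitrary environment strategy (always plays some enabled move). -/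
noncomputable def junkStrategy (G : GameStructure S Me Ms) : EnvStrategy G where
  act := fun _ s => (G.exists_succ s).choose
  act_enabled := fun _ s => (G.exists_succ s).choose_spec

/-- For each state `a ∈ conc \ d`, a strategy enforcing `d ∪ step-succ(a)`. -/
noncomputable def subStrat (G : GameStructure S Me Ms) (d : Set S) (step : Set (S × S))
    (conc : Set S)
    (hstep : ∀ s ∈ conc, s ∉ d → s ∈ attrEnv G (d ∪ {s' : S | (s, s') ∈ step}))
    (a : S) : EnvStrategy G :=
  if h : a ∈ conc ∧ a ∉ d then
    (show ∃ σ : EnvStrategy G, ∀ π : ℕ → S, π 0 = a → EnvPlay G σ π →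
        ∃ n : ℕ, π n ∈ d ∪ {s' : S | (a, s') ∈ step} from hstep a h.1 h.2).choose
  else junkStrategy G

lemma subStrat_spec (G : GameStructure S Me Ms) (d : Set S) (step : Set (S × S))
    (conc : Set S)
    (hstep : ∀ s ∈ conc, s ∉ d → s ∈ attrEnv G (d ∪ {s' : S | (s, s') ∈ step}))
    (a : S) (h1 : a ∈ conc) (h2 : a ∉ d) :
    ∀ π : ℕ → S, π 0 = a → EnvPlay G (subStrat G d step conc hstep a) π →
      ∃ n : ℕ, π n ∈ d ∪ {s' : S | (a, s') ∈ step} := by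
  have h : subStrat G d step conc hstep a =
      (show ∃ σ : EnvStrategy G, ∀ π : ℕ → S, π 0 = a → EnvPlay G σ π →
        ∃ n : ℕ, π n ∈ d ∪ {s' : S | (a, s') ∈ step} from hstep a h1 h2).choose :=
    dif_pos ⟨h1, h2⟩
  rw [h]
  exact (show ∃ σ : EnvStrategy G, ∀ π : ℕ → S, π 0 = a → EnvPlay G σ π →
        ∃ n : ℕ, π n ∈ d ∪ {s' : S | (a, s') ∈ step} from hstep a h1 h2).choose_spec

/-- Scan a history, tracking the current anchor and the segment history. -/
noncomputable def go (d : Set S) (step : Set (S × S)) : S → List S → List S → S × List S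
  | a, hs, [] => (a, hs)
  | a, hs, x :: rest =>
      if x ∉ d ∧ (a, x) ∈ step then go d step x [x] rest else go d step a (hs ++ [x]) rest

lemma go_append (d : Set S) (step : Set (S × S)) (a : S) (hs l : List S) (x : S) :
    go d step a hs (l ++ [x]) =
      if x ∉ d ∧ ((go d step a hs l).1, x) ∈ step then (x, [x])
      else ((go d step a hs l).1, (go d step a hs l).2 ++ [x]) := by
  induction l generalizing a hs with
  | nil => simp [go]; congr
  | cons y t ih =>
    simp only [List.cons_append, go]
    split <;> apply ih

/-- The anchor and segment history determined by a full history and a current state. -/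
noncomputable def seg (d : Set S) (step : Set (S × S)) : List S → S → S × List S
  | [], s => (s, [])
  | s0 :: t, s =>
      if s ∉ d ∧ ((go d step s0 [s0] t).1, s) ∈ step then (s, [])
      else go d step s0 [s0] t

/-- The anchor-time sequence along a play. -/
noncomputable def ancSeq (step : Set (S × S)) (π : ℕ → S) : ℕ → ℕ
  | 0 => 0
  | n + 1 => if (π (ancSeq step π n), π (n + 1)) ∈ step then n + 1 else ancSeq step π n

end AccelAux

/-- Lemma 6.3 (soundness of attractor acceleration, environment player): if
`(base, step, conc)` is a semantic acceleration lemma over the states with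
`base ⊆ d`, and from every state `s ∈ conc \ d` the environment can enforce reaching
`d` or a `step`-successor of `s`, then `conc ⊆ Attr_Env(d)`. -/
theorem accel_subset_attrEnv (G : GameStructure S Me Ms) (d : Set S)
    (base conc : Set S) (step : Set (S × S))
    (hlem : IsAccelLemma base step conc)
    (hbase : base ⊆ d)
    (hstep : ∀ s ∈ conc, s ∉ d → s ∈ attrEnv G (d ∪ {s' : S | (s, s') ∈ step})) :
    conc ⊆ attrEnv G d := by
  classical
  intro s0 hs0
  by_cases hd0 : s0 ∈ d
  · exact ⟨junkStrategy G, fun π h0 _ => ⟨0, h0 ▸ hd0⟩⟩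
  · refine ⟨⟨fun h s => (subStrat G d step conc hstep (seg d step h s).1).act
        (seg d step h s).2 s,
      fun h s => (subStrat G d step conc hstep (seg d step h s).1).act_enabled _ _⟩, ?_⟩
    intro π h0 hplay
    by_contra hnever
    push_neg at hnever
    -- `anc n` is the start time of the current segment at time `n`
    set anc : ℕ → ℕ := ancSeq step π with hancdef
    have hanc0 : anc 0 = 0 := rfl
    have hancS : ∀ n, anc (n + 1) =
        if (π (anc n), π (n + 1)) ∈ step then n + 1 else anc n := by
      intro n; rw [hancdef]; rw [ancSeq]
    have hanc_le : ∀ n, anc n ≤ n := by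
      intro n
      induction n with
      | zero => exact le_rfl
      | succ n ih =>
        rw [hancS]
        split
        · exact le_rfl
        · exact ih.trans (Nat.le_succ n)
    have hanc_mono : ∀ n, anc n ≤ anc (n + 1) := by
      intro n
      rw [hancS]
      split
      · exact (hanc_le n).trans (Nat.le_succ n)
      · exact le_rfl
    have hanc_mono' : ∀ p q, p ≤ q → anc p ≤ anc q := by
      intro p q h
      induction h with
      | refl => exact le_rfl
      | step _ ih => exact ih.trans (hanc_mono _)
    have hanc_idem : ∀ n, anc (anc n) = anc n := by
      intro n
      induction n with
      | zero => rw [hanc0]; exact hanc0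
      | succ n ih =>
        by_cases hc : (π (anc n), π (n + 1)) ∈ step
        · rw [hancS n, if_pos hc, hancS n, if_pos hc]
        · rw [hancS n, if_neg hc, ih]
    have hconst : ∀ j n, anc n ≤ j → j ≤ n → anc j = anc n := by
      intro j n h1 h2
      have l1 := hanc_mono' _ _ h1
      have l2 := hanc_mono' _ _ h2
      have l3 := hanc_idem n
      omega
    -- the scan computes exactly the anchor and segment history
    have hgo : ∀ n, go d step (π 0) [π 0] ((List.range n).map fun k => π (k + 1)) =
        (π (anc n), (List.range (n + 1 - anc n)).map fun k => π (anc n + k)) := by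
      intro n
      induction n with
      | zero => simp [go, hanc0, show List.range 1 = [0] from rfl]
      | succ n ih =>
        rw [List.range_succ, List.map_append, List.map_singleton, go_append, ih]
        by_cases hc : (π (anc n), π (n + 1)) ∈ step
        · rw [if_pos ⟨hnever (n + 1), hc⟩, hancS n, if_pos hc]
          have h1 : n + 1 + 1 - (n + 1) = 1 := by omega
          rw [h1]
          simp [show List.range 1 = [0] from rfl]
        · rw [if_neg (fun hh => hc hh.2), hancS n, if_neg hc]
          have h1 : n + 1 + 1 - anc n = (n + 1 - anc n) + 1 := by
            have := hanc_le n; omega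
          have h2 : anc n + (n + 1 - anc n) = n + 1 := by
            have := hanc_le n; omega
          rw [h1, List.range_succ, List.map_append]
          simp [h2]
    have hseg : ∀ n, seg d step ((List.range n).map π) (π n) =
        (π (anc n), (List.range (n - anc n)).map fun k => π (anc n + k)) := by
      intro n
      cases n with
      | zero => simp [seg, hanc0]
      | succ n =>
        have hrange : (List.range (n + 1)).map π
            = π 0 :: ((List.range n).map fun k => π (k + 1)) := by
          rw [List.range_succ_eq_map]
          simp [List.map_map, Function.comp_def]
        rw [hrange]
        show (if π (n + 1) ∉ d ∧
            ((go d step (π 0) [π 0] ((List.range n).map fun k => π (k + 1))).1, π (n + 1)) ∈ step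
          then (π (n + 1), ([] : List S))
          else go d step (π 0) [π 0] ((List.range n).map fun k => π (k + 1))) = _
        rw [hgo n]
        by_cases hc : (π (anc n), π (n + 1)) ∈ step
        · rw [if_pos ⟨hnever (n + 1), hc⟩, hancS n, if_pos hc]
          simp
        · rw [if_neg (fun hh => hc hh.2), hancS n, if_neg hc]
    -- anchors stay in `conc`
    have hconc : ∀ n, π (anc n) ∈ conc := by
      intro n
      induction n with
      | zero => rw [hanc0, h0]; exact hs0
      | succ n ih =>
        by_cases hc : (π (anc n), π (n + 1)) ∈ step
        · rw [hancS n, if_pos hc]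
          exact hlem.2 _ ih (fun hb => hnever (anc n) (hbase hb)) _ hc
        · rw [hancS n, if_neg hc]; exact ih
    by_cases hinf : ∀ N, ∃ n, N ≤ n ∧ (π (anc n), π (n + 1)) ∈ step
    · -- infinitely many segment switches: contradiction with the acceleration lemma
      have hdec : ∀ N, DecidablePred fun n => N ≤ n ∧ (π (anc n), π (n + 1)) ∈ step :=
        fun N n => Classical.propDecidable _
      let nxt : ℕ → ℕ := fun N => @Nat.find _ (hdec N) (hinf N)
      have hnxt_spec : ∀ N, N ≤ nxt N ∧ (π (anc (nxt N)), π (nxt N + 1)) ∈ step :=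
        fun N => @Nat.find_spec _ (hdec N) (hinf N)
      have hnxt_min : ∀ N j, j < nxt N → ¬(N ≤ j ∧ (π (anc j), π (j + 1)) ∈ step) :=
        fun N j h => @Nat.find_min _ (hdec N) (hinf N) j h
      have hconstN : ∀ N k, N + k ≤ nxt N → anc (N + k) = anc N := by
        intro N k
        induction k with
        | zero => intro _; rfl
        | succ k ih =>
          intro h
          have hk : N + k ≤ nxt N := by omega
          rw [show N + (k + 1) = (N + k) + 1 from rfl, hancS, if_neg, ih hk]
          intro hc
          exact hnxt_min N (N + k) (by omega) ⟨by omega, hc⟩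
      let t : ℕ → ℕ := fun k => Nat.rec 0 (fun _ p => nxt p + 1) k
      have ht0 : t 0 = 0 := rfl
      have htS : ∀ k, t (k + 1) = nxt (t k) + 1 := fun _ => rfl
      have hchain : ∀ k, (π (anc (t k)), π (anc (t (k + 1)))) ∈ step := by
        intro k
        have hs1 := hnxt_spec (t k)
        have h1 : anc (nxt (t k)) = anc (t k) := by
          have h2 := hconstN (t k) (nxt (t k) - t k) (by omega)
          rw [show t k + (nxt (t k) - t k) = nxt (t k) from by omega] at h2
          exact h2
        have h2 : anc (t (k + 1)) = nxt (t k) + 1 := by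
          rw [htS, hancS, if_pos hs1.2]
        rw [h2, ← h1]
        exact hs1.2
      obtain ⟨k, hk⟩ := hlem.1 (fun k => π (anc (t k)))
        (by show π (anc (t 0)) ∈ conc; rw [ht0, hanc0, h0]; exact hs0) hchain
      exact hnever _ (hbase hk)
    · -- eventually no more switches: a single sub-strategy runs forever
      push_neg at hinf
      obtain ⟨N, hN⟩ := hinf
      have hA : ∀ n, anc N ≤ n → anc n = anc N := by
        intro n hn
        rcases le_or_gt n N with h | h
        · exact hconst n N hn h
        · have haux : ∀ k, anc (N + k) = anc N := by
            intro k
            induction k with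
            | zero => rfl
            | succ k ih =>
              rw [show N + (k + 1) = (N + k) + 1 from rfl, hancS,
                if_neg (hN (N + k) (by omega)), ih]
          have h2 := haux (n - N)
          rw [show N + (n - N) = n from by omega] at h2
          exact h2
      set m := anc N with hm
      have ha_conc : π m ∈ conc := hconc N
      have ha_nd : π m ∉ d := hnever m
      have hplay' : EnvPlay G (subStrat G d step conc hstep (π m)) (fun k => π (m + k)) := by
        intro k
        obtain ⟨ms, hms, hrel⟩ := hplay (m + k)
        have hseg' := hseg (m + k)
        rw [hA (m + k) (by omega)] at hseg'
        rw [show m + k - m = k from by omega] at hseg'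
        have key : (subStrat G d step conc hstep
              (seg d step ((List.range (m + k)).map π) (π (m + k))).1).act
              (seg d step ((List.range (m + k)).map π) (π (m + k))).2 (π (m + k))
            = (subStrat G d step conc hstep (π m)).act
              ((List.range k).map fun j => π (m + j)) (π (m + k)) := by
          rw [hseg']
        rw [key] at hms hrel
        exact ⟨ms, hms, hrel⟩
      obtain ⟨n, hn⟩ := subStrat_spec G d step conc hstep (π m) ha_conc ha_nd
        (fun k => π (m + k)) rfl hplay'
      rcases hn with hn | hn
      · exact hnever _ hn
      · cases n with
        | zero =>
          obtain ⟨k, hk⟩ := hlem.1 (fun _ => π m) ha_conc (fun _ => hn)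
          exact ha_nd (hbase hk)
        | succ j =>
          have h1 : anc (m + j) = m := hA _ (by omega)
          have h2 : (π (anc (m + j)), π (m + j + 1)) ∈ step := by rw [h1]; exact hn
          have h3 : anc (m + j + 1) = m + j + 1 := by rw [hancS, if_pos h2]
          have h4 : anc (m + j + 1) = m := hA _ (by omega)
          omega
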